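/- Let Δ > 0 and let f : ℝ → ℝ be continuous. For each integer n ≥ 0 define the translated scaled Legendre function l_n(x, t) = √(2n+1)·P_n(2(x−t)/Δ + 1) and the coefficient c_n(t) = (1/Δ)·∫_{t−Δ}^{t} f(x)·l_n(x, t) dx. Then each c_n is differentiable in t and satisfies the exact linear differential equation c_n'(t) = −(2/Δ)·Σ_{i odd, 1 ≤ i ≤ n} √((2(n−i)+1)·(2n+1))·c_{n−i}(t) + (√(2n+1)/Δ)·(f(t) − (−1)^n·f(t−Δ)). -/

import Mathlib

open MeasureTheory Set

noncomputable def legendreP (n : ℕ) (y : ℝ) : ℝ :=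
  (1 / ((2 : ℝ) ^ n * (n.factorial : ℝ))) *
    iteratedDeriv n (fun x : ℝ => (x ^ 2 - 1) ^ n) y

noncomputable def hzeta (s a : ℝ) : ℝ := ∑' k : ℕ, ((k : ℝ) + a) ^ (-s)

/-- Translated scaled Legendre function l_n(x, t) = √(2n+1)·P_n(2(x−t)/Δ + 1). -/
noncomputable def ltrans (Δ t : ℝ) (n : ℕ) (x : ℝ) : ℝ :=
  Real.sqrt (2 * (n : ℝ) + 1) * legendreP n (2 * (x - t) / Δ + 1)

/-- Coefficient c_n(t) = (1/Δ)·∫_{t−Δ}^{t} f(x)·l_n(x, t) dx. -/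
noncomputable def coefDt (Δ t : ℝ) (f : ℝ → ℝ) (n : ℕ) : ℝ :=
  (1 / Δ) * ∫ x in (t - Δ)..t, f x * ltrans Δ t n x

/-- Truncated Legendre reconstruction ĝ_N(x) = Σ_{n=0}^{N−1} c_n·l_n(x). -/
noncomputable def reconDt (Δ t : ℝ) (f : ℝ → ℝ) (N : ℕ) (x : ℝ) : ℝ :=
  ∑ n ∈ Finset.range N, coefDt Δ t f n * ltrans Δ t n x

open Polynomial

lemma du : derivative (X^2 - 1 : ℝ[X]) = 2*X := by
  simp [derivative_pow, map_ofNat]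

/-- Iterated derivative Leibniz for `X * g`. -/
lemma iterDeriv_X_mul (g : ℝ[X]) (k : ℕ) :
    derivative^[k+1] (X * g) =
      X * derivative^[k+1] g + C ((k : ℝ) + 1) * derivative^[k] g := by
  induction k with
  | zero => simp [derivative_mul]; ring
  | succ k ih =>
    rw [show k+1+1 = (k+1)+1 from rfl, Function.iterate_succ_apply', ih]
    simp only [derivative_add, derivative_mul, derivative_X, derivative_C, zero_mul, add_zero,
      zero_add, one_mul]
    rw [← Function.iterate_succ_apply' derivative (k+1) g,
        ← Function.iterate_succ_apply' derivative k g]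
    push_cast
    simp only [map_add, map_mul, map_one, map_ofNat]
    ring

/-- Iterated derivative Leibniz for `(X^2-1) * g`, order `k+2`. -/
lemma iterDeriv_u_mul (g : ℝ[X]) (k : ℕ) :
    derivative^[k+2] ((X^2 - 1) * g) =
      (X^2 - 1) * derivative^[k+2] g
        + C (2*((k : ℝ) + 2)) * (X * derivative^[k+1] g)
        + C (((k : ℝ) + 2) * ((k : ℝ) + 1)) * derivative^[k] g := by
  induction k with
  | zero =>
    have h2 : ∀ p : ℝ[X], derivative^[0+2] p = derivative (derivative p) := fun p => rfl
    have h1 : derivative^[0+1] g = derivative g := rfl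
    have h0 : derivative^[0] g = g := rfl
    rw [h2, h2, h1, h0, derivative_mul, du]
    simp only [derivative_add, derivative_mul, du, derivative_X, derivative_ofNat, zero_mul,
      add_zero, zero_add, mul_one]
    push_cast
    simp only [map_add, map_mul, map_one, map_ofNat, map_zero]
    ring
  | succ k ih =>
    rw [show k+1+2 = (k+2)+1 from rfl, Function.iterate_succ_apply', ih]
    simp only [derivative_add, derivative_mul, derivative_C, du, zero_mul, add_zero, zero_add,
      derivative_X, mul_one]
    rw [← Function.iterate_succ_apply' derivative (k+2) g,
        ← Function.iterate_succ_apply' derivative (k+1) g,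
        ← Function.iterate_succ_apply' derivative k g]
    rw [show (k+2)+1 = (k+1)+2 from rfl]
    push_cast
    simp only [map_add, map_mul, map_one, map_ofNat]
    ring

noncomputable def Apoly (n : ℕ) : ℝ[X] := derivative^[n] ((X^2-1)^n)
noncomputable def Vpoly (n : ℕ) : ℝ[X] := derivative^[n] ((X^2-1)^(n+1))

lemma deriv_upow (m : ℕ) :
    derivative ((X^2-1)^(m+1) : ℝ[X]) = C (2*((m:ℝ)+1)) * (X * (X^2-1)^m) := by
  rw [derivative_pow, du]
  push_cast
  simp only [Nat.add_sub_cancel, map_add, map_mul, map_one, map_ofNat]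
  ring

lemma G1 (n : ℕ) :
    derivative (Apoly (n+1)) =
      C (2*((n:ℝ)+1)) * (X * derivative (Apoly n) + C ((n:ℝ)+1) * Apoly n) := by
  have h : derivative (Apoly (n+1)) = derivative^[n+1] (derivative ((X^2-1)^(n+1))) := by
    rw [Apoly, ← Function.iterate_succ_apply' derivative (n+1), Function.iterate_succ_apply]
  rw [h, deriv_upow, iterate_derivative_C_mul, iterDeriv_X_mul, Apoly,
    ← Function.iterate_succ_apply' derivative n]

lemma way2 (n : ℕ) :
    Apoly (n+2) = C (2*((n:ℝ)+2)) * (X * Apoly (n+1) + C ((n:ℝ)+1) * Vpoly n) := by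
  have h : Apoly (n+2) = derivative^[n+1] (derivative ((X^2-1)^(n+2))) := by
    rw [Apoly, Function.iterate_succ_apply]
  rw [h, show n+2 = (n+1)+1 from rfl, deriv_upow, iterate_derivative_C_mul, iterDeriv_X_mul]
  rw [Apoly, Vpoly]
  push_cast
  ring_nf

lemma G2 (n : ℕ) :
    (X^2-1) * derivative (Apoly (n+1)) = C (((n:ℝ)+1)*((n:ℝ)+2)) * Vpoly n := by
  have w1 : Apoly (n+2) =
      (X^2-1) * derivative (Apoly (n+1))
        + C (2*((n:ℝ)+2)) * (X * Apoly (n+1))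
        + C (((n:ℝ)+2)*((n:ℝ)+1)) * Vpoly n := by
    have : ((X^2-1)^(n+2) : ℝ[X]) = (X^2-1) * (X^2-1)^(n+1) := by ring
    rw [Apoly, this, iterDeriv_u_mul, ← Apoly, ← Vpoly,
      show (⇑derivative)^[n+2] ((X^2-1)^(n+1) : ℝ[X]) = derivative (Apoly (n+1)) from by
        rw [Apoly]; exact Function.iterate_succ_apply' derivative (n+1) _]
  have w2 := way2 n
  rw [w1] at w2
  simp only [map_add, map_mul, map_one, map_ofNat] at w2 ⊢
  linear_combination w2

lemma evalV (n : ℕ) (y : ℝ) (hy : y = 1 ∨ y = -1) : (Vpoly n).eval y = 0 := by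
  have h := congrArg (Polynomial.eval y) (G2 n)
  simp only [eval_mul, eval_add, eval_sub, eval_pow, eval_X, eval_one, eval_C] at h
  have hy2 : y^2 - 1 = 0 := by rcases hy with h|h <;> rw [h] <;> ring
  rw [hy2, zero_mul] at h
  have hne : ((n:ℝ)+1)*((n:ℝ)+2) ≠ 0 := by positivity
  exact (mul_eq_zero.1 h.symm).resolve_left hne

lemma Apoly_zero : Apoly 0 = 1 := by simp [Apoly]

lemma Apoly_one : Apoly 1 = 2*X := by
  rw [Apoly, pow_one, Function.iterate_one, du]

lemma evalA (n : ℕ) : (Apoly n).eval 1 = 2^n * n.factorial ∧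
    (Apoly n).eval (-1) = (-2)^n * n.factorial := by
  induction n using Nat.twoStepInduction with
  | zero => simp [Apoly_zero]
  | one => simp [Apoly_one]
  | more n ih1 ih2 =>
    have h1 := congrArg (Polynomial.eval 1) (way2 n)
    have h2 := congrArg (Polynomial.eval (-1)) (way2 n)
    simp only [eval_mul, eval_add, eval_C, eval_X, one_mul] at h1 h2
    rw [evalV n 1 (Or.inl rfl), ih2.1] at h1
    rw [evalV n (-1) (Or.inr rfl), ih2.2] at h2
    constructor
    · rw [h1]
      push_cast [Nat.factorial_succ]
      ring
    · rw [h2]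
      push_cast [Nat.factorial_succ]
      ring

lemma G5 (m : ℕ) :
    X * derivative (Apoly (m+1)) =
      C (2*((m:ℝ)+1)) * derivative (Apoly m) + C ((m:ℝ)+1) * Apoly (m+1) := by
  cases m with
  | zero =>
    rw [Apoly_zero, Apoly_one]
    simp only [derivative_one, derivative_mul, derivative_X, derivative_ofNat, zero_mul, add_zero,
      zero_add, mul_one, Nat.cast_zero]
    norm_num
    ring
  | succ k =>
    have e1 := G1 (k+1)
    have e2 := G2 k
    have e4 := way2 k
    push_cast at e1 e2 e4 ⊢
    simp only [map_add, map_mul, map_one, map_ofNat] at e1 e2 e4 ⊢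
    linear_combination X * e1 + (2*(C (k:ℝ) + 2)) * e2 - (C (k:ℝ) + 2) * e4

lemma Arec (m : ℕ) :
    derivative (Apoly (m+2)) =
      C (4*((m:ℝ)+1)*((m:ℝ)+2)) * derivative (Apoly m)
        + C (2*(2*(m:ℝ)+3)*((m:ℝ)+2)) * Apoly (m+1) := by
  have e1 := G1 (m+1)
  have e5 := G5 m
  push_cast at e1 e5 ⊢
  simp only [map_add, map_mul, map_one, map_ofNat] at e1 e5 ⊢
  linear_combination e1 + (2*(C (m:ℝ) + 2)) * e5

noncomputable def LPpoly (n : ℕ) : ℝ[X] := C (1/(2^n * n.factorial : ℝ)) * Apoly n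

lemma LP_eval_one (n : ℕ) : (LPpoly n).eval 1 = 1 := by
  rw [LPpoly, eval_mul, eval_C, (evalA n).1]
  have h2 : (2:ℝ)^n ≠ 0 := by positivity
  have hf : (n.factorial : ℝ) ≠ 0 := Nat.cast_ne_zero.2 n.factorial_ne_zero
  field_simp

lemma LP_eval_negone (n : ℕ) : (LPpoly n).eval (-1) = (-1)^n := by
  rw [LPpoly, eval_mul, eval_C, (evalA n).2]
  have h2 : (2:ℝ)^n ≠ 0 := by positivity
  have hf : (n.factorial : ℝ) ≠ 0 := Nat.cast_ne_zero.2 n.factorial_ne_zero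
  rw [show ((-2:ℝ))^n = (-1)^n * 2^n by rw [← neg_one_mul, mul_pow]]
  field_simp

lemma LPpoly_zero : LPpoly 0 = 1 := by
  rw [LPpoly, Apoly_zero]
  norm_num

lemma LPpoly_one : LPpoly 1 = X := by
  rw [LPpoly, Apoly_one]
  have h : (C (1/(2^1 * (1:ℕ).factorial : ℝ))) * 2 = 1 := by
    rw [← map_ofNat (C : ℝ →+* ℝ[X]) 2, ← map_mul]
    norm_num
  rw [← mul_assoc, h, one_mul]

lemma LP_rec (n : ℕ) :
    derivative (LPpoly (n+2)) = derivative (LPpoly n) + C (2*(n:ℝ)+3) * LPpoly (n+1) := by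
  have h2 : ∀ m : ℕ, (2:ℝ)^m ≠ 0 := fun m => by positivity
  have hf : ∀ m : ℕ, (m.factorial : ℝ) ≠ 0 := fun m => Nat.cast_ne_zero.2 m.factorial_ne_zero
  have c1 : (1/(2^(n+2) * (n+2).factorial : ℝ)) * (4*((n:ℝ)+1)*((n:ℝ)+2))
      = 1/(2^n * n.factorial) := by
    push_cast [Nat.factorial_succ]
    field_simp
    ring
  have c2 : (1/(2^(n+2) * (n+2).factorial : ℝ)) * (2*(2*(n:ℝ)+3)*((n:ℝ)+2))
      = (2*(n:ℝ)+3) * (1/(2^(n+1) * (n+1).factorial)) := by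
    push_cast [Nat.factorial_succ]
    field_simp
    ring
  rw [LPpoly, derivative_C_mul, Arec, LPpoly, derivative_C_mul, LPpoly, mul_add,
    ← mul_assoc, ← mul_assoc, ← C_mul, ← C_mul, c1, c2, C_mul, mul_assoc]

lemma LP_deriv (n : ℕ) :
    derivative (LPpoly n) =
      ∑ i ∈ Finset.range (n+1),
        if Odd i then C (2*(((n - i : ℕ)):ℝ)+1) * LPpoly (n-i) else 0 := by
  induction n using Nat.twoStepInduction with
  | zero =>
    rw [Finset.sum_range_one, LPpoly_zero]
    norm_num
  | one =>
    rw [Finset.sum_range_succ, Finset.sum_range_one, LPpoly_one, LPpoly_zero]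
    norm_num
  | more n ih _ =>
    rw [LP_rec, ih, Finset.sum_range_succ' _ (n+2), Finset.sum_range_succ' _ (n+1)]
    have g0 : (if Odd 0 then C (2*(((n+2-0 : ℕ)):ℝ)+1) * LPpoly (n+2-0) else 0) = 0 := by
      norm_num
    have g1 : (if Odd (0+1) then C (2*(((n+2-(0+1) : ℕ)):ℝ)+1) * LPpoly (n+2-(0+1)) else 0)
        = C (2*(n:ℝ)+3) * LPpoly (n+1) := by
      rw [if_pos (by exact ⟨0, by omega⟩ : Odd (0+1)), show n+2-(0+1) = n+1 from by omega]
      congr 1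
      push_cast
      ring
    rw [g0, g1]
    have hcong : ∀ i ∈ Finset.range (n+1),
        (if Odd (i+1+1) then C (2*(((n+2-(i+1+1) : ℕ)):ℝ)+1) * LPpoly (n+2-(i+1+1)) else 0)
          = (if Odd i then C (2*(((n - i : ℕ)):ℝ)+1) * LPpoly (n-i) else 0) := by
      intro i _
      have hodd : Odd (i+1+1) ↔ Odd i := by simp [Nat.odd_add]
      have hsub : n+2-(i+1+1) = n-i := by omega
      rw [hsub]
      by_cases h : Odd i
      · rw [if_pos (hodd.2 h), if_pos h]
      · rw [if_neg (fun hh => h (hodd.1 hh)), if_neg h]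
    rw [Finset.sum_congr rfl hcong]
    ring

lemma iteratedDeriv_polyeval (p : ℝ[X]) (n : ℕ) :
    iteratedDeriv n (fun x => p.eval x) = fun x => (derivative^[n] p).eval x := by
  induction n with
  | zero => simp
  | succ n ih =>
    rw [iteratedDeriv_succ, ih, Function.iterate_succ_apply']
    funext x
    exact Polynomial.deriv _

lemma legendreP_eq (n : ℕ) (y : ℝ) : legendreP n y = (LPpoly n).eval y := by
  rw [legendreP, LPpoly, eval_mul, eval_C]
  congr 1
  rw [show (fun x : ℝ => (x^2 - 1)^n) = fun x => ((X^2-1)^n : ℝ[X]).eval x from by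
    funext x; simp, iteratedDeriv_polyeval]
  rfl

section Analytic

variable {Δ : ℝ}

lemma mono_key (hΔ : 0 < Δ) (k : ℕ) : ∀ (f : ℝ → ℝ), Continuous f → ∀ t : ℝ,
    HasDerivAt (fun τ => ∫ x in (τ - Δ)..τ, f x * (2*(x-τ)/Δ+1)^k)
      (f t - f (t-Δ) * (-1:ℝ)^k
        + ∫ x in (t - Δ)..t, f x * ((k:ℝ) * (2*(x-t)/Δ+1)^(k-1)) * (-2/Δ)) t := by
  induction k with
  | zero =>
    intro f hf t
    have hrw : ∀ τ : ℝ, (∫ x in (τ - Δ)..τ, f x * (2*(x-τ)/Δ+1)^0)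
        = (∫ x in (0:ℝ)..τ, f x) - ∫ x in (0:ℝ)..(τ-Δ), f x := by
      intro τ
      simp only [pow_zero, mul_one]
      rw [eq_sub_iff_add_eq, add_comm, intervalIntegral.integral_add_adjacent_intervals
        (hf.intervalIntegrable _ _) (hf.intervalIntegrable _ _)]
    have H1 := (hf.integral_hasStrictDerivAt 0 t).hasDerivAt
    have H2 := ((hf.integral_hasStrictDerivAt 0 (t-Δ)).hasDerivAt).comp t
      ((hasDerivAt_id t).sub_const Δ)
    have H := H1.sub H2
    simp only [hrw]
    refine H.congr_deriv (Eq.symm ?_)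
    simp
  | succ k ih =>
    intro f hf t
    have hf1 : Continuous (fun x => f x * (2*x/Δ)) := by fun_prop
    have hrw : ∀ τ : ℝ, (∫ x in (τ - Δ)..τ, f x * (2*(x-τ)/Δ+1)^(k+1))
        = (∫ x in (τ - Δ)..τ, (f x * (2*x/Δ)) * (2*(x-τ)/Δ+1)^k)
          + (1 - 2*τ/Δ) * ∫ x in (τ - Δ)..τ, f x * (2*(x-τ)/Δ+1)^k := by
      intro τ
      rw [← intervalIntegral.integral_const_mul,
        ← intervalIntegral.integral_add
          ((by fun_prop : Continuous fun x => (f x * (2*x/Δ)) * (2*(x-τ)/Δ+1)^k).intervalIntegrable _ _)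
          ((by fun_prop : Continuous fun x => (1 - 2*τ/Δ) * (f x * (2*(x-τ)/Δ+1)^k)).intervalIntegrable _ _)]
      apply intervalIntegral.integral_congr
      intro x _
      ring
    have H1 := ih _ hf1 t
    have H2 := ih f hf t
    have H3 : HasDerivAt (fun τ : ℝ => 1 - 2*τ/Δ) (-2/Δ) t := by
      have := (((hasDerivAt_id t).const_mul (2:ℝ)).div_const Δ).const_sub 1
      simpa [neg_div] using this
    have H := H1.add (H3.mul H2)
    simp only [hrw]
    refine H.congr_deriv (Eq.symm ?_)
    have e1 : (∫ x in (t - Δ)..t, f x * (((k+1:ℕ):ℝ) * (2*(x-t)/Δ+1)^(k+1-1)) * (-2/Δ))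
        = (∫ x in (t - Δ)..t,
            ((f x * (2*x/Δ)) * ((k:ℝ) * (2*(x-t)/Δ+1)^(k-1)) * (-2/Δ)
              + (-2/Δ * (f x * (2*(x-t)/Δ+1)^k)
                + (1 - 2*t/Δ) * (f x * ((k:ℝ) * (2*(x-t)/Δ+1)^(k-1)) * (-2/Δ))))) := by
      apply intervalIntegral.integral_congr
      intro x _
      have hx : 2*x/Δ = (2*(x-t)/Δ+1) - (1 - 2*t/Δ) := by ring
      simp only [hx]
      generalize (2*(x-t)/Δ+1) = y
      rcases k with _ | j
      · norm_num
        ring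
      · simp only [Nat.add_sub_cancel]
        push_cast
        ring
    rw [e1, intervalIntegral.integral_add
        ((by fun_prop : Continuous fun x =>
          (f x * (2*x/Δ)) * ((k:ℝ) * (2*(x-t)/Δ+1)^(k-1)) * (-2/Δ)).intervalIntegrable _ _)
        ((by fun_prop : Continuous fun x =>
          -2/Δ * (f x * (2*(x-t)/Δ+1)^k)
            + (1 - 2*t/Δ) * (f x * ((k:ℝ) * (2*(x-t)/Δ+1)^(k-1)) * (-2/Δ))).intervalIntegrable _ _),
      intervalIntegral.integral_add
        ((by fun_prop : Continuous fun x =>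
          -2/Δ * (f x * (2*(x-t)/Δ+1)^k)).intervalIntegrable _ _)
        ((by fun_prop : Continuous fun x =>
          (1 - 2*t/Δ) * (f x * ((k:ℝ) * (2*(x-t)/Δ+1)^(k-1)) * (-2/Δ))).intervalIntegrable _ _),
      intervalIntegral.integral_const_mul, intervalIntegral.integral_const_mul]
    push_cast
    have hΔ' : Δ ≠ 0 := ne_of_gt hΔ
    linear_combination (-2 * f (t-Δ) * (-1:ℝ)^k) * mul_inv_cancel₀ hΔ'

end Analytic

lemma cont_aux {Δ : ℝ} (f : ℝ → ℝ) (hf : Continuous f) (p : ℝ[X]) (τ : ℝ) :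
    Continuous fun x : ℝ => f x * p.eval (2*(x-τ)/Δ+1) :=
  hf.mul (p.continuous.comp (by fun_prop))

lemma poly_key {Δ : ℝ} (hΔ : 0 < Δ) (p : ℝ[X]) (f : ℝ → ℝ) (hf : Continuous f) (t : ℝ) :
    HasDerivAt (fun τ => ∫ x in (τ - Δ)..τ, f x * p.eval (2*(x-τ)/Δ+1))
      (f t * p.eval 1 - f (t-Δ) * p.eval (-1)
        + ∫ x in (t - Δ)..t, f x * (p.derivative.eval (2*(x-t)/Δ+1)) * (-2/Δ)) t := by
  induction p using Polynomial.induction_on' with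
  | add p q hp hq =>
    have hrw : ∀ τ : ℝ, (∫ x in (τ - Δ)..τ, f x * (p+q).eval (2*(x-τ)/Δ+1))
        = (∫ x in (τ - Δ)..τ, f x * p.eval (2*(x-τ)/Δ+1))
          + ∫ x in (τ - Δ)..τ, f x * q.eval (2*(x-τ)/Δ+1) := by
      intro τ
      rw [← intervalIntegral.integral_add
        ((cont_aux f hf p τ).intervalIntegrable _ _)
        ((cont_aux f hf q τ).intervalIntegrable _ _)]
      apply intervalIntegral.integral_congr
      intro x _
      simp only [eval_add]
      ring
    have H := hp.add hq
    simp only [hrw]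
    refine H.congr_deriv (Eq.symm ?_)
    have e1 : (∫ x in (t - Δ)..t, f x * ((p+q).derivative.eval (2*(x-t)/Δ+1)) * (-2/Δ))
        = (∫ x in (t - Δ)..t, f x * (p.derivative.eval (2*(x-t)/Δ+1)) * (-2/Δ))
          + ∫ x in (t - Δ)..t, f x * (q.derivative.eval (2*(x-t)/Δ+1)) * (-2/Δ) := by
      rw [← intervalIntegral.integral_add
        ((show Continuous fun x =>
          f x * (p.derivative.eval (2*(x-t)/Δ+1)) * (-2/Δ) from
            (cont_aux f hf p.derivative t).mul continuous_const).intervalIntegrable _ _)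
        ((show Continuous fun x =>
          f x * (q.derivative.eval (2*(x-t)/Δ+1)) * (-2/Δ) from
            (cont_aux f hf q.derivative t).mul continuous_const).intervalIntegrable _ _)]
      apply intervalIntegral.integral_congr
      intro x _
      simp only [derivative_add, eval_add]
      ring
    rw [e1]
    simp only [derivative_add, eval_add]
    ring
  | monomial n a =>
    have H := (mono_key hΔ n f hf t).const_mul a
    have hrw : ∀ τ : ℝ, (∫ x in (τ - Δ)..τ, f x * (monomial n a).eval (2*(x-τ)/Δ+1))
        = a * ∫ x in (τ - Δ)..τ, f x * (2*(x-τ)/Δ+1)^n := by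
      intro τ
      rw [← intervalIntegral.integral_const_mul]
      apply intervalIntegral.integral_congr
      intro x _
      simp only [eval_monomial]
      ring
    simp only [hrw]
    refine H.congr_deriv (Eq.symm ?_)
    have e1 : (∫ x in (t - Δ)..t, f x * ((monomial n a).derivative.eval (2*(x-t)/Δ+1)) * (-2/Δ))
        = a * ∫ x in (t - Δ)..t, f x * ((n:ℝ) * (2*(x-t)/Δ+1)^(n-1)) * (-2/Δ) := by
      rw [← intervalIntegral.integral_const_mul]
      apply intervalIntegral.integral_congr
      intro x _
      simp only [derivative_monomial, eval_monomial]
      push_cast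
      ring
    rw [e1]
    simp only [eval_monomial]
    ring

lemma coef_eq {Δ : ℝ} (f : ℝ → ℝ) (m : ℕ) (τ : ℝ) :
    coefDt Δ τ f m = (Real.sqrt (2*(m:ℝ)+1)/Δ)
      * ∫ x in (τ - Δ)..τ, f x * (LPpoly m).eval (2*(x-τ)/Δ+1) := by
  rw [coefDt]
  have h : (∫ x in (τ - Δ)..τ, f x * ltrans Δ τ m x)
      = Real.sqrt (2*(m:ℝ)+1) * ∫ x in (τ - Δ)..τ, f x * (LPpoly m).eval (2*(x-τ)/Δ+1) := by
    rw [← intervalIntegral.integral_const_mul]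
    apply intervalIntegral.integral_congr
    intro x _
    simp only [ltrans, legendreP_eq]
    ring
  rw [h]
  ring

/-- each coefficient c_n(t) is differentiable in t and satisfies the exact
linear differential equation of the HiPPO/translated-Legendre projection. -/
theorem hasDerivAt_coefDt (Δ : ℝ) (hΔ : 0 < Δ) (f : ℝ → ℝ) (hf : Continuous f)
    (n : ℕ) (t : ℝ) :
    HasDerivAt (fun τ => coefDt Δ τ f n)
      (-(2 / Δ) * (∑ i ∈ (Finset.range (n + 1)).filter (fun i => Odd i),
          Real.sqrt ((2 * ((n - i : ℕ) : ℝ) + 1) * (2 * (n : ℝ) + 1)) * coefDt Δ t f (n - i))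
        + (Real.sqrt (2 * (n : ℝ) + 1) / Δ) * (f t - (-1 : ℝ) ^ n * f (t - Δ))) t := by

  have H := (poly_key hΔ (LPpoly n) f hf t).const_mul (Real.sqrt (2*(n:ℝ)+1)/Δ)
  rw [show (fun τ => coefDt Δ τ f n) = fun τ => (Real.sqrt (2*(n:ℝ)+1)/Δ)
      * ∫ x in (τ - Δ)..τ, f x * (LPpoly n).eval (2*(x-τ)/Δ+1) from funext (coef_eq f n)]
  refine H.congr_deriv (Eq.symm ?_)
  rw [LP_eval_one, LP_eval_negone]
  -- rewrite the derivative integral as a finite sum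
  have hI : (∫ x in (t - Δ)..t, f x * ((LPpoly n).derivative.eval (2*(x-t)/Δ+1)) * (-2/Δ))
      = ∑ i ∈ Finset.range (n+1), (if Odd i then
          (2*((n-i:ℕ):ℝ)+1) * (-2/Δ)
            * ∫ x in (t - Δ)..t, f x * (LPpoly (n-i)).eval (2*(x-t)/Δ+1) else 0) := by
    have h1 : (∫ x in (t - Δ)..t, f x * ((LPpoly n).derivative.eval (2*(x-t)/Δ+1)) * (-2/Δ))
        = ∫ x in (t - Δ)..t, (∑ i ∈ Finset.range (n+1), (if Odd i then
            f x * ((2*((n-i:ℕ):ℝ)+1) * (LPpoly (n-i)).eval (2*(x-t)/Δ+1)) * (-2/Δ) else 0)) := by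
      apply intervalIntegral.integral_congr
      intro x _
      simp only [LP_deriv, eval_finset_sum, Finset.sum_mul, Finset.mul_sum]
      apply Finset.sum_congr rfl
      intro i _
      by_cases h : Odd i
      · simp only [if_pos h, eval_mul, eval_C]
        try ring
      · simp only [if_neg h, eval_zero]
        try ring
    rw [h1, intervalIntegral.integral_finset_sum]
    · apply Finset.sum_congr rfl
      intro i _
      by_cases h : Odd i
      · simp only [if_pos h]
        rw [← intervalIntegral.integral_const_mul]
        apply intervalIntegral.integral_congr
        intro x _
        ring
      · simp only [if_neg h]
        simp
    · intro i _
      by_cases h : Odd i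
      · simp only [if_pos h]
        exact ((hf.mul (continuous_const.mul ((LPpoly (n-i)).continuous.comp
          ((by fun_prop) : Continuous fun x : ℝ => 2*(x-t)/Δ+1)))).mul
            continuous_const).intervalIntegrable _ _
      · simp only [if_neg h]
        exact intervalIntegrable_const
  rw [hI, Finset.sum_filter]
  have hsq : ∀ m : ℕ, Real.sqrt ((2*((m:ℕ):ℝ)+1) * (2*(n:ℝ)+1)) * Real.sqrt (2*((m:ℕ):ℝ)+1)
      = (2*((m:ℕ):ℝ)+1) * Real.sqrt (2*(n:ℝ)+1) := by
    intro m
    rw [Real.sqrt_mul (by positivity), mul_right_comm, Real.mul_self_sqrt (by positivity)]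
  have hsum : ∀ i ∈ Finset.range (n+1),
      (if Odd i then Real.sqrt ((2*((n-i:ℕ):ℝ)+1) * (2*(n:ℝ)+1)) * coefDt Δ t f (n-i) else 0)
        = (if Odd i then (Real.sqrt (2*(n:ℝ)+1) * ((2*((n-i:ℕ):ℝ)+1) / Δ))
            * ∫ x in (t - Δ)..t, f x * (LPpoly (n-i)).eval (2*(x-t)/Δ+1) else 0) := by
    intro i _
    by_cases h : Odd i
    · rw [if_pos h, if_pos h, coef_eq]
      have h2 := hsq (n-i)
      generalize (∫ x in (t - Δ)..t, f x * (LPpoly (n-i)).eval (2*(x-t)/Δ+1)) = I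
      linear_combination (I/Δ) * h2
    · rw [if_neg h, if_neg h]
  rw [Finset.sum_congr rfl hsum]
  have hmain : (-(2/Δ)) * (∑ i ∈ Finset.range (n+1),
      (if Odd i then (Real.sqrt (2*(n:ℝ)+1) * ((2*((n-i:ℕ):ℝ)+1) / Δ))
        * ∫ x in (t - Δ)..t, f x * (LPpoly (n-i)).eval (2*(x-t)/Δ+1) else 0))
      = (Real.sqrt (2*(n:ℝ)+1)/Δ) * (∑ i ∈ Finset.range (n+1), (if Odd i then
          (2*((n-i:ℕ):ℝ)+1) * (-2/Δ)
            * ∫ x in (t - Δ)..t, f x * (LPpoly (n-i)).eval (2*(x-t)/Δ+1) else 0)) := by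
    rw [Finset.mul_sum, Finset.mul_sum]
    apply Finset.sum_congr rfl
    intro i _
    by_cases h : Odd i
    · rw [if_pos h, if_pos h]
      ring
    · rw [if_neg h, if_neg h]
      ring
  linear_combination hmain
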